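/- Let u^1, ..., u^{n+1} be unit vectors in R^n with ⟨u^j,u^k⟩ = -1/n + ((n+1)/n)δ_{jk}, and define Q_{ijk} = Σ_ℓ u^ℓ_i u^ℓ_j u^ℓ_k. Then for each k, contracting Q against u^k in one index yields Q u^k = ((n+1)/n)(P^k − (1/n) I(n)), i.e., Σ_m Q_{ijm} u^k_m = ((n+1)/n)(u^k_i u^k_j − δ_{ij}/n). -/

import Mathlib

open Finset

theorem stmt_5 (n : ℕ) (hn : 2 ≤ n) (u : Fin (n + 1) → Fin n → ℝ)
    (h : ∀ j k, ∑ i, u j i * u k i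
      = -1 / (n : ℝ) + ((n : ℝ) + 1) / (n : ℝ) * (if j = k then 1 else 0))
    (Q : Fin n → Fin n → Fin n → ℝ)
    (hQ : ∀ i j k, Q i j k = ∑ ℓ, u ℓ i * u ℓ j * u ℓ k) :
    ∀ (k : Fin (n + 1)) (i j : Fin n),
      ∑ m, Q i j m * u k m
        = ((n : ℝ) + 1) / (n : ℝ) * (u k i * u k j - (if i = j then 1 else 0) / (n : ℝ)) := by
  have hn0 : (n : ℝ) ≠ 0 := Nat.cast_ne_zero.mpr (by omega)
  have hnpos : (0 : ℝ) < n := Nat.cast_pos.mpr (by omega)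
  obtain ⟨c, hcdef⟩ : ∃ c : ℝ, c = ((n : ℝ) + 1) / n := ⟨_, rfl⟩
  simp_rw [← hcdef] at h
  have hcpos : 0 < c := by rw [hcdef]; positivity
  have hc0 : c ≠ 0 := ne_of_gt hcpos
  set A : Fin n → Fin n → ℝ := fun i j => ∑ ℓ, u ℓ i * u ℓ j with hAdef
  -- column sums vanish
  have hsk : ∀ k', ∑ i', (∑ ℓ, u ℓ i') * u k' i' = 0 := by
    intro k'
    have e1 : ∑ i', (∑ ℓ, u ℓ i') * u k' i' = ∑ ℓ, ∑ i', u ℓ i' * u k' i' := by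
      simp_rw [Finset.sum_mul]
      exact Finset.sum_comm
    rw [e1]
    simp_rw [h]
    rw [Finset.sum_add_distrib, Finset.sum_const, ← Finset.mul_sum]
    simp only [Finset.sum_ite_eq', Finset.mem_univ, if_pos, Finset.card_univ, Fintype.card_fin]
    rw [hcdef]
    field_simp
    ring_nf; rw [mul_inv_cancel₀ hn0, pow_two, mul_assoc, mul_inv_cancel₀ hn0]; ring
  have hs : ∀ i', (∑ ℓ, u ℓ i') = 0 := by
    have hsq : ∑ i', (∑ ℓ, u ℓ i') ^ 2 = 0 := by
      have e1 : ∑ i', (∑ ℓ, u ℓ i') ^ 2 = ∑ ℓ, ∑ i', (∑ ℓ', u ℓ' i') * u ℓ i' := by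
        simp_rw [pow_two, Finset.mul_sum]
        exact Finset.sum_comm
      rw [e1]
      exact Finset.sum_eq_zero fun ℓ _ => hsk ℓ
    intro i'
    have := (Finset.sum_eq_zero_iff_of_nonneg (fun x _ => sq_nonneg _)).mp hsq i' (Finset.mem_univ _)
    exact pow_eq_zero_iff (by norm_num) |>.mp this
  have hAsymm : ∀ i j, A i j = A j i := by
    intro i j
    exact Finset.sum_congr rfl fun ℓ _ => mul_comm _ _
  -- A is almost-idempotent
  have hA2 : ∀ i j, ∑ m, A i m * A m j = c * A i j := by
    intro i j
    have e1 : ∑ m, A i m * A m j = ∑ ℓ, ∑ m, (u ℓ i * u ℓ m) * A m j := by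
      simp_rw [hAdef, Finset.sum_mul]
      exact Finset.sum_comm
    rw [e1]
    have e2 : ∀ ℓ, ∑ m, (u ℓ i * u ℓ m) * A m j = ∑ ℓ', ∑ m, (u ℓ i * u ℓ m) * (u ℓ' m * u ℓ' j) := by
      intro ℓ
      simp_rw [hAdef, Finset.mul_sum]
      exact Finset.sum_comm
    simp_rw [e2]
    have e3 : ∀ ℓ ℓ', ∑ m, (u ℓ i * u ℓ m) * (u ℓ' m * u ℓ' j)
        = u ℓ i * u ℓ' j * (-1 / (n : ℝ) + c * (if ℓ = ℓ' then 1 else 0)) := by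
      intro ℓ ℓ'
      rw [← h ℓ ℓ', Finset.mul_sum]
      exact Finset.sum_congr rfl fun m _ => by ring
    simp_rw [e3]
    have e4 : ∀ ℓ, ∑ ℓ', u ℓ i * u ℓ' j * (-1 / (n : ℝ) + c * (if ℓ = ℓ' then 1 else 0))
        = c * (u ℓ i * u ℓ j) := by
      intro ℓ
      have expand : ∀ ℓ' : Fin (n + 1),
          u ℓ i * u ℓ' j * (-1 / (n : ℝ) + c * (if ℓ = ℓ' then 1 else 0))
          = (-1 / (n : ℝ) * u ℓ i) * u ℓ' j + (if ℓ = ℓ' then c * (u ℓ i * u ℓ' j) else 0) := by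
        intro ℓ'; split <;> ring
      simp_rw [expand]
      rw [Finset.sum_add_distrib, ← Finset.mul_sum, hs j, Finset.sum_ite_eq]
      simp
    simp_rw [e4]
    rw [hAdef, Finset.mul_sum]
  have htr : ∑ i', A i' i' = (n : ℝ) + 1 := by
    have e1 : ∑ i', A i' i' = ∑ ℓ, ∑ i', u ℓ i' * u ℓ i' := by
      simp_rw [hAdef]; exact Finset.sum_comm
    rw [e1]
    have e2 : ∀ ℓ : Fin (n + 1), ∑ i', u ℓ i' * u ℓ i' = 1 := by
      intro ℓ
      rw [h ℓ ℓ, if_pos rfl, hcdef]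
      field_simp
      ring
    simp_rw [e2]
    simp
  -- C = 1 - A/c is a symmetric idempotent with trace zero, hence zero
  set C : Fin n → Fin n → ℝ := fun i j => (if i = j then 1 else 0) - A i j / c with hCdef
  have hCsymm : ∀ i j, C i j = C j i := by
    intro i j
    simp_rw [hCdef, hAsymm i j]
    congr 1
    simp [eq_comm]
  have hCidem : ∀ i j, ∑ m, C i m * C m j = C i j := by
    intro i j
    have expand : ∀ m : Fin n, C i m * C m j
        = (if i = m then C m j else 0) - (if m = j then A i m / c else 0)
          + A i m * A m j / c ^ 2 := by
      intro m
      simp_rw [hCdef]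
      split <;> split <;> ring
    simp_rw [expand]
    rw [Finset.sum_add_distrib, Finset.sum_sub_distrib, Finset.sum_ite_eq, Finset.sum_ite_eq']
    simp only [Finset.mem_univ, if_pos]
    have : ∑ m, A i m * A m j / c ^ 2 = (∑ m, A i m * A m j) / c ^ 2 := by
      rw [Finset.sum_div]
    rw [this, hA2]
    simp_rw [hCdef]
    field_simp
    ring
  have hCtr : ∑ i', C i' i' = 0 := by
    simp_rw [hCdef]
    rw [Finset.sum_sub_distrib, ← Finset.sum_div, htr]
    simp only [if_pos, Finset.sum_const, Finset.card_univ, Fintype.card_fin, nsmul_eq_mul, mul_one]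
    rw [hcdef]
    field_simp
    ring
  have hCzero : ∀ i j, C i j = 0 := by
    have hsq : ∑ i', ∑ m, C i' m ^ 2 = 0 := by
      have e1 : ∀ i', ∑ m, C i' m ^ 2 = C i' i' := by
        intro i'
        rw [← hCidem i' i']
        exact Finset.sum_congr rfl fun m _ => by rw [pow_two, hCsymm i' m]
      simp_rw [e1]
      exact hCtr
    intro i j
    have h1 := (Finset.sum_eq_zero_iff_of_nonneg
      (fun x _ => Finset.sum_nonneg fun m _ => sq_nonneg _)).mp hsq i (Finset.mem_univ _)
    have h2 := (Finset.sum_eq_zero_iff_of_nonneg (fun m _ => sq_nonneg _)).mp h1 j (Finset.mem_univ _)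
    exact pow_eq_zero_iff (by norm_num) |>.mp h2
  have hA : ∀ i j, A i j = if i = j then c else 0 := by
    intro i j
    have := hCzero i j
    simp_rw [hCdef] at this
    have : A i j / c = if i = j then 1 else 0 := by linarith [this]
    calc A i j = A i j / c * c := by field_simp
    _ = (if i = j then 1 else 0) * c := by rw [this]
    _ = if i = j then c else 0 := by split <;> ring
  -- final computation
  intro k i j
  have e1 : ∑ m, Q i j m * u k m = ∑ ℓ, ∑ m, (u ℓ i * u ℓ j * u ℓ m) * u k m := by
    simp_rw [hQ, Finset.sum_mul]
    exact Finset.sum_comm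
  rw [e1]
  have e2 : ∀ ℓ, ∑ m, (u ℓ i * u ℓ j * u ℓ m) * u k m
      = u ℓ i * u ℓ j * (-1 / (n : ℝ) + c * (if ℓ = k then 1 else 0)) := by
    intro ℓ
    rw [← h ℓ k, Finset.mul_sum]
    exact Finset.sum_congr rfl fun m _ => by ring
  simp_rw [e2]
  have expand : ∀ ℓ : Fin (n + 1),
      u ℓ i * u ℓ j * (-1 / (n : ℝ) + c * (if ℓ = k then 1 else 0))
      = (-1 / (n : ℝ)) * (u ℓ i * u ℓ j) + (if ℓ = k then c * (u ℓ i * u ℓ j) else 0) := by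
    intro ℓ; split <;> ring
  simp_rw [expand]
  rw [Finset.sum_add_distrib, ← Finset.mul_sum, Finset.sum_ite_eq']
  simp only [Finset.mem_univ, if_pos]
  rw [show (∑ ℓ, u ℓ i * u ℓ j) = A i j from rfl, hA i j]
  rw [hcdef]
  split <;> (field_simp; try ring)
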